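/- Let M be a nonempty multiset of positive integers with sum k', cardinality c, and in which j occurs with multiplicity a_j. Then for every natural number n with n ≥ k' - 1, the number of subsets S of {0, 1, …, n-1} whose multiset of lengths of maximal runs equals M satisfies: (that number) · ∏_j (a_j)! = ∏_{t=0}^{c-1} (n + 1 - k' - t). -/

import Mathlib

/-- The multiset of lengths of the maximal runs (maximal sets of consecutive
integers) contained in a finite set `S` of natural numbers: for each `a ∈ S`
which starts a run (i.e. `a = 0` or `a - 1 ∉ S`), we record the length of the
run starting at `a`, namely the number of `x ≥ a` with `[a, x] ⊆ S`. -/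
def runLengths (S : Finset ℕ) : Multiset ℕ :=
  (S.filter fun a => a = 0 ∨ a - 1 ∉ S).val.map
    fun a => (S.filter fun x => a ≤ x ∧ Finset.Icc a x ⊆ S).card

def addEmb (k : ℕ) : ℕ ↪ ℕ := ⟨fun x => x + k, add_left_injective k⟩

lemma mem_map_add {S : Finset ℕ} {k x : ℕ} :
    x ∈ S.map (addEmb k) ↔ k ≤ x ∧ x - k ∈ S := by
  simp only [Finset.mem_map, addEmb, Function.Embedding.coeFn_mk]
  constructor
  · rintro ⟨a, ha, rfl⟩
    exact ⟨Nat.le_add_left _ _, by simpa using ha⟩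
  · rintro ⟨h1, h2⟩
    exact ⟨x - k, h2, by omega⟩

lemma runLengths_map_add (S : Finset ℕ) (k : ℕ) :
    runLengths (S.map (addEmb k)) = runLengths S := by
  unfold runLengths
  have hstart : (S.map (addEmb k)).filter (fun a => a = 0 ∨ a - 1 ∉ S.map (addEmb k))
      = (S.filter fun a => a = 0 ∨ a - 1 ∉ S).map (addEmb k) := by
    ext a
    rw [Finset.mem_filter, mem_map_add, mem_map_add, mem_map_add, Finset.mem_filter]
    constructor
    · rintro ⟨⟨hka, haS⟩, h2⟩
      refine ⟨hka, haS, ?_⟩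
      by_cases hak : a = k
      · exact Or.inl (by omega)
      · refine Or.inr fun hmem => ?_
        rcases h2 with h | h
        · omega
        · exact h ⟨by omega, by rwa [show a - 1 - k = a - k - 1 by omega]⟩
    · rintro ⟨hka, haS, h2⟩
      refine ⟨⟨hka, haS⟩, ?_⟩
      rcases Nat.eq_zero_or_pos a with rfl | hpos
      · exact Or.inl rfl
      · refine Or.inr ?_
        rintro ⟨h1, hmem⟩
        rcases h2 with h | h
        · omega
        · exact h (by rwa [show a - 1 - k = a - k - 1 by omega] at hmem)
  rw [hstart, Finset.map_val, Multiset.map_map]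
  apply Multiset.map_congr rfl
  intro a ha
  simp only [Function.comp_apply]
  have hek : (addEmb k) a = a + k := rfl
  rw [hek]
  have hset : (S.map (addEmb k)).filter
      (fun x => a + k ≤ x ∧ Finset.Icc (a + k) x ⊆ S.map (addEmb k))
      = (S.filter fun x => a ≤ x ∧ Finset.Icc a x ⊆ S).map (addEmb k) := by
    ext x
    rw [Finset.mem_filter, mem_map_add, mem_map_add, Finset.mem_filter]
    constructor
    · rintro ⟨⟨hkx, hxS⟩, hax, hIcc⟩
      refine ⟨by omega, hxS, by omega, fun y hy => ?_⟩
      rw [Finset.mem_Icc] at hy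
      have h2 : y + k ∈ S.map (addEmb k) := hIcc (Finset.mem_Icc.mpr (by omega))
      rw [mem_map_add] at h2
      simpa using h2.2
    · rintro ⟨hkx, hxS, hax, hIcc⟩
      refine ⟨⟨hkx, hxS⟩, by omega, fun y hy => ?_⟩
      rw [Finset.mem_Icc] at hy
      rw [mem_map_add]
      exact ⟨by omega, hIcc (Finset.mem_Icc.mpr (by omega))⟩
  rw [hset, Finset.card_map]

lemma runLengths_union_range {l : ℕ} (hl : 0 < l) (T : Finset ℕ)
    (hT : ∀ x ∈ T, l < x) :
    runLengths (Finset.range l ∪ T) = l ::ₘ runLengths T := by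
  set S := Finset.range l ∪ T with hS
  have hmem : ∀ x, x ∈ S ↔ x < l ∨ x ∈ T := by
    intro x; simp [hS, Finset.mem_union, Finset.mem_range]
  have hlnot : l ∉ S := by
    rw [hmem]
    rintro (h | h)
    · omega
    · exact absurd (hT l h) (lt_irrefl l)
  -- starts of S = insert 0 (starts of T)
  have hstart : S.filter (fun a => a = 0 ∨ a - 1 ∉ S)
      = insert 0 (T.filter fun a => a = 0 ∨ a - 1 ∉ T) := by
    ext a
    rw [Finset.mem_filter, Finset.mem_insert, Finset.mem_filter]
    constructor
    · rintro ⟨haS, h2⟩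
      rcases Nat.eq_zero_or_pos a with rfl | hpos
      · exact Or.inl rfl
      · rcases h2 with h | h
        · omega
        · rw [hmem] at haS
          rcases haS with h' | h'
          · exfalso; exact h (by rw [hmem]; left; omega)
          · exact Or.inr ⟨h', Or.inr fun hmm => h (by rw [hmem]; right; exact hmm)⟩
    · rintro (rfl | ⟨haT, h2⟩)
      · exact ⟨by rw [hmem]; left; omega, Or.inl rfl⟩
      · have hla : l < a := hT a haT
        refine ⟨by rw [hmem]; right; exact haT, ?_⟩
        rcases h2 with h | h
        · omega
        · refine Or.inr fun hmm => ?_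
          rw [hmem] at hmm
          rcases hmm with h' | h'
          · omega
          · exact h h'
  -- length at 0 is l
  have hlen0 : (S.filter fun x => 0 ≤ x ∧ Finset.Icc 0 x ⊆ S).card = l := by
    have : (S.filter fun x => 0 ≤ x ∧ Finset.Icc 0 x ⊆ S) = Finset.range l := by
      ext x
      rw [Finset.mem_filter, Finset.mem_range]
      constructor
      · rintro ⟨hxS, -, hIcc⟩
        by_contra h
        push_neg at h
        exact hlnot (hIcc (Finset.mem_Icc.mpr ⟨Nat.zero_le _, h⟩))
      · intro hx
        refine ⟨by rw [hmem]; left; exact hx, Nat.zero_le _, fun y hy => ?_⟩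
        rw [Finset.mem_Icc] at hy
        rw [hmem]; left; omega
    rw [this, Finset.card_range]
  -- length at a start a of T agrees
  have hlen : ∀ a ∈ T, (S.filter fun x => a ≤ x ∧ Finset.Icc a x ⊆ S)
      = (T.filter fun x => a ≤ x ∧ Finset.Icc a x ⊆ T) := by
    intro a haT
    have hla : l < a := hT a haT
    ext x
    rw [Finset.mem_filter, Finset.mem_filter]
    constructor
    · rintro ⟨hxS, hax, hIcc⟩
      rw [hmem] at hxS
      have hxT : x ∈ T := by rcases hxS with h | h; omega; exact h
      refine ⟨hxT, hax, fun y hy => ?_⟩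
      rw [Finset.mem_Icc] at hy
      have := hIcc (Finset.mem_Icc.mpr hy)
      rw [hmem] at this
      rcases this with h | h; omega; exact h
    · rintro ⟨hxT, hax, hIcc⟩
      refine ⟨by rw [hmem]; right; exact hxT, hax, fun y hy => ?_⟩
      rw [hmem]; right; exact hIcc hy
  unfold runLengths
  rw [hstart]
  have h0notin : (0:ℕ) ∉ T.filter (fun a => a = 0 ∨ a - 1 ∉ T) := by
    rw [Finset.mem_filter]
    rintro ⟨h0T, -⟩
    exact absurd (hT 0 h0T) (by omega)
  rw [Finset.insert_val, Multiset.ndinsert_of_notMem (by simpa using h0notin),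
    Multiset.map_cons, hlen0]
  congr 1
  apply Multiset.map_congr rfl
  intro a ha
  have haT : a ∈ T := (Finset.mem_filter.mp ha).1
  rw [hlen a haT]

lemma runLengths_empty : runLengths ∅ = 0 := by
  simp [runLengths]

lemma runLengths_eq_zero {S : Finset ℕ} (h : runLengths S = 0) : S = ∅ := by
  by_contra hne
  have hstart : S.min' (Finset.nonempty_iff_ne_empty.mpr hne) ∈
      S.filter (fun a => a = 0 ∨ a - 1 ∉ S) := by
    set a := S.min' _ with ha
    rw [Finset.mem_filter]
    refine ⟨S.min'_mem _, ?_⟩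
    rcases Nat.eq_zero_or_pos a with h0 | hpos
    · exact Or.inl h0
    · refine Or.inr fun hmm => ?_
      have := S.min'_le _ hmm
      omega
  unfold runLengths at h
  rw [Multiset.map_eq_zero, Finset.val_eq_zero] at h
  rw [h] at hstart
  simp at hstart

lemma sum_runLengths_le (S : Finset ℕ) : (runLengths S).sum ≤ S.card := by
  classical
  set F := S.filter (fun a => a = 0 ∨ a - 1 ∉ S) with hF
  set g : ℕ → Finset ℕ := fun a => S.filter fun x => a ≤ x ∧ Finset.Icc a x ⊆ S with hg
  have hsum : (runLengths S).sum = ∑ a ∈ F, (g a).card := rfl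
  rw [hsum]
  have hdisj : ∀ a ∈ F, ∀ b ∈ F, a ≠ b → Disjoint (g a) (g b) := by
    intro a ha b hb hab
    wlog hlt : a < b generalizing a b
    · exact (this b hb a ha hab.symm (by omega)).symm
    rw [Finset.disjoint_left]
    intro x hxa hxb
    rw [hg, Finset.mem_filter] at hxa hxb
    obtain ⟨-, hax, hIcc⟩ := hxa
    obtain ⟨-, hbx, -⟩ := hxb
    have hbS : b - 1 ∈ S := hIcc (Finset.mem_Icc.mpr ⟨by omega, by omega⟩)
    have h2 := (Finset.mem_filter.mp hb).2
    rcases h2 with h | h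
    · omega
    · exact h hbS
  calc ∑ a ∈ F, (g a).card = (F.biUnion g).card := (Finset.card_biUnion hdisj).symm
    _ ≤ S.card := Finset.card_le_card (fun x hx => by
        obtain ⟨a, -, hxa⟩ := Finset.mem_biUnion.mp hx
        exact (Finset.mem_filter.mp hxa).1)

-- first run length
def firstLen (S : Finset ℕ) : ℕ :=
  (S.filter fun x => 0 ≤ x ∧ Finset.Icc 0 x ⊆ S).card

lemma firstLen_filter_eq_range {S : Finset ℕ} (h0 : 0 ∈ S) :
    (S.filter fun x => 0 ≤ x ∧ Finset.Icc 0 x ⊆ S) = Finset.range (firstLen S) := by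
  set F := S.filter fun x => 0 ≤ x ∧ Finset.Icc 0 x ⊆ S with hF
  have hdc : ∀ x ∈ F, ∀ y ≤ x, y ∈ F := by
    intro x hx y hy
    rw [hF, Finset.mem_filter] at hx ⊢
    obtain ⟨hxS, -, hIcc⟩ := hx
    exact ⟨hIcc (Finset.mem_Icc.mpr ⟨Nat.zero_le _, hy⟩), Nat.zero_le _,
      fun z hz => hIcc (Finset.mem_Icc.mpr ⟨Nat.zero_le _, by
        rw [Finset.mem_Icc] at hz; omega⟩)⟩
  have key : ∀ x, x ∈ F ↔ x < F.card := by
    intro x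
    constructor
    · intro hx
      have hsub : Finset.range (x + 1) ⊆ F := fun y hy =>
        hdc x hx y (by rw [Finset.mem_range] at hy; omega)
      have := Finset.card_le_card hsub
      rw [Finset.card_range] at this
      omega
    · intro hx
      by_contra hxF
      have hsub : F ⊆ Finset.range x := by
        intro y hy
        rw [Finset.mem_range]
        by_contra hyx
        exact hxF (hdc y hy x (by omega))
      have := Finset.card_le_card hsub
      rw [Finset.card_range] at this
      omega
  ext x
  rw [Finset.mem_range]
  exact key x

lemma range_firstLen_subset {S : Finset ℕ} (h0 : 0 ∈ S) :
    Finset.range (firstLen S) ⊆ S := by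
  rw [← firstLen_filter_eq_range h0]
  exact Finset.filter_subset _ _

lemma firstLen_not_mem {S : Finset ℕ} (h0 : 0 ∈ S) : firstLen S ∉ S := by
  intro hmem
  have : firstLen S ∈ Finset.range (firstLen S) := by
    rw [← firstLen_filter_eq_range h0, Finset.mem_filter]
    refine ⟨hmem, Nat.zero_le _, fun y hy => ?_⟩
    rw [Finset.mem_Icc] at hy
    rcases Nat.lt_or_ge y (firstLen S) with h | h
    · exact range_firstLen_subset h0 (Finset.mem_range.mpr h)
    · have : y = firstLen S := by omega
      rw [this]; exact hmem
  simp at this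

lemma firstLen_pos {S : Finset ℕ} (h0 : 0 ∈ S) : 0 < firstLen S := by
  have : (0:ℕ) ∈ S.filter fun x => 0 ≤ x ∧ Finset.Icc 0 x ⊆ S := by
    rw [Finset.mem_filter]
    exact ⟨h0, le_refl _, fun y hy => by
      rw [Finset.mem_Icc] at hy; have : y = 0 := by omega
      rw [this]; exact h0⟩
  exact Finset.card_pos.mpr ⟨0, this⟩

lemma firstLen_eq {S : Finset ℕ} {l : ℕ} (hsub : Finset.range l ⊆ S) (hnot : l ∉ S) :
    firstLen S = l := by
  unfold firstLen
  have : (S.filter fun x => 0 ≤ x ∧ Finset.Icc 0 x ⊆ S) = Finset.range l := by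
    ext x
    rw [Finset.mem_filter, Finset.mem_range]
    constructor
    · rintro ⟨hxS, -, hIcc⟩
      by_contra h
      push_neg at h
      exact hnot (hIcc (Finset.mem_Icc.mpr ⟨Nat.zero_le _, h⟩))
    · intro hx
      refine ⟨hsub (Finset.mem_range.mpr hx), Nat.zero_le _, fun y hy => ?_⟩
      rw [Finset.mem_Icc] at hy
      exact hsub (Finset.mem_range.mpr (by omega))
  rw [this, Finset.card_range]


lemma image_sub_map_add {T : Finset ℕ} {k : ℕ} (hk : ∀ x ∈ T, k ≤ x) :
    (T.image (fun x => x - k)).map (addEmb k) = T := by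
  ext x
  rw [mem_map_add]
  constructor
  · rintro ⟨hkx, hmem⟩
    rw [Finset.mem_image] at hmem
    obtain ⟨y, hy, hyx⟩ := hmem
    have := hk y hy
    have : y = x := by omega
    rwa [← this]
  · intro hx
    exact ⟨hk x hx, Finset.mem_image.mpr ⟨x, hx, rfl⟩⟩

lemma map_add_image_sub (T : Finset ℕ) (k : ℕ) :
    (T.map (addEmb k)).image (fun x => x - k) = T := by
  rw [Finset.map_eq_image, Finset.image_image]
  have : ∀ x ∈ T, ((fun x => x - k) ∘ (addEmb k)) x = id x := by
    intro x hx
    simp only [Function.comp_apply, addEmb, Function.Embedding.coeFn_mk, id]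
    omega
  rw [Finset.image_congr (fun x hx => this x hx), Finset.image_id]

def countSet (n : ℕ) (M : Multiset ℕ) : Finset (Finset ℕ) :=
  (Finset.range n).powerset.filter fun S => runLengths S = M

lemma mem_countSet {n : ℕ} {M : Multiset ℕ} {S : Finset ℕ} :
    S ∈ countSet n M ↔ S ⊆ Finset.range n ∧ runLengths S = M := by
  rw [countSet, Finset.mem_filter, Finset.mem_powerset]

lemma countSet_zero (n : ℕ) : (countSet n 0).card = 1 := by
  have : countSet n 0 = {∅} := by
    ext S
    rw [mem_countSet, Finset.mem_singleton]
    constructor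
    · rintro ⟨-, h⟩; exact runLengths_eq_zero h
    · rintro rfl; exact ⟨Finset.empty_subset _, runLengths_empty⟩
  rw [this, Finset.card_singleton]

/-- decomposition of a set containing 0 -/
lemma decomp {S : Finset ℕ} (h0 : 0 ∈ S) :
    S = Finset.range (firstLen S) ∪ (S \ Finset.range (firstLen S)) ∧
    (∀ x ∈ S \ Finset.range (firstLen S), firstLen S < x) ∧
    runLengths S = firstLen S ::ₘ runLengths (S \ Finset.range (firstLen S)) := by
  have hsub := range_firstLen_subset h0
  have hnot := firstLen_not_mem h0
  have h1 : S = Finset.range (firstLen S) ∪ (S \ Finset.range (firstLen S)) :=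
    (Finset.union_sdiff_of_subset hsub).symm
  have h2 : ∀ x ∈ S \ Finset.range (firstLen S), firstLen S < x := by
    intro x hx
    rw [Finset.mem_sdiff, Finset.mem_range] at hx
    rcases Nat.lt_or_ge (firstLen S) x with h | h
    · exact h
    · have : x = firstLen S := by omega
      exact absurd (this ▸ hx.1) hnot
  refine ⟨h1, h2, ?_⟩
  conv_lhs => rw [h1]
  exact runLengths_union_range (firstLen_pos h0) _ h2

lemma card_no_zero (n : ℕ) (M : Multiset ℕ) :
    ((countSet n M).filter fun S => 0 ∉ S).card = (countSet (n-1) M).card := by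
  refine Finset.card_bij' (fun S _ => S.image (fun x => x - 1))
    (fun T _ => T.map (addEmb 1)) ?_ ?_ ?_ ?_
  · intro S hS
    show S.image (fun x => x - 1) ∈ countSet (n-1) M
    rw [Finset.mem_filter, mem_countSet] at hS
    obtain ⟨⟨hsub, hrl⟩, h0⟩ := hS
    have hcancel : (S.image (fun x => x - 1)).map (addEmb 1) = S :=
      image_sub_map_add (fun x hx => by
        rcases Nat.eq_zero_or_pos x with rfl | h; exact absurd hx h0; omega)
    rw [mem_countSet]
    constructor
    · intro y hy
      rw [Finset.mem_image] at hy
      obtain ⟨x, hx, rfl⟩ := hy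
      have hxn := Finset.mem_range.mp (hsub hx)
      have hx0 : x ≠ 0 := fun h => h0 (h ▸ hx)
      rw [Finset.mem_range]; omega
    · have h4 := runLengths_map_add (S.image fun x => x - 1) 1
      rw [hcancel] at h4
      rw [← h4]; exact hrl
  · intro T hT
    show T.map (addEmb 1) ∈ (countSet n M).filter fun S => 0 ∉ S
    rw [mem_countSet] at hT
    obtain ⟨hsub, hrl⟩ := hT
    rw [Finset.mem_filter, mem_countSet]
    refine ⟨⟨fun x hx => ?_, by rw [runLengths_map_add]; exact hrl⟩, fun h0 => ?_⟩
    · rw [mem_map_add] at hx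
      have := Finset.mem_range.mp (hsub hx.2)
      rw [Finset.mem_range]; omega
    · rw [mem_map_add] at h0; omega

  · intro S hS
    show (S.image (fun x => x - 1)).map (addEmb 1) = S
    rw [Finset.mem_filter] at hS
    exact image_sub_map_add (fun x hx => by
      rcases Nat.eq_zero_or_pos x with rfl | h; exact absurd hx hS.2; omega)
  · intro T hT
    show (T.map (addEmb 1)).image (fun x => x - 1) = T
    exact map_add_image_sub T 1



lemma card_with_zero (n : ℕ) (M : Multiset ℕ) (hpos : ∀ j ∈ M, 0 < j)
    (hn : M.sum ≤ n) :
    ((countSet n M).filter fun S => 0 ∈ S).card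
      = ∑ l ∈ M.toFinset, (countSet (n - l - 1) (M.erase l)).card := by
  rw [Finset.card_eq_sum_card_fiberwise
    (f := firstLen) (t := M.toFinset) ?hf]
  case hf =>
    intro S hS
    rw [Finset.mem_coe, Finset.mem_filter, mem_countSet] at hS
    obtain ⟨⟨hsub, hrl⟩, h0⟩ := hS
    obtain ⟨-, -, h3⟩ := decomp h0
    rw [Finset.mem_coe, Multiset.mem_toFinset, ← hrl, h3]
    exact Multiset.mem_cons_self _ _
  apply Finset.sum_congr rfl
  intro l hl
  rw [Multiset.mem_toFinset] at hl
  have hlpos : 0 < l := hpos l hl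
  have hln : l ≤ n := le_trans (Multiset.le_sum_of_mem hl) hn
  refine Finset.card_bij' (fun S _ => (S \ Finset.range l).image (fun x => x - (l+1)))
    (fun T _ => Finset.range l ∪ T.map (addEmb (l+1))) ?_ ?_ ?_ ?_
  · -- forward membership
    intro S hS
    show (S \ Finset.range l).image (fun x => x - (l+1)) ∈ countSet (n - l - 1) (M.erase l)
    rw [Finset.mem_filter, Finset.mem_filter, mem_countSet] at hS
    obtain ⟨⟨⟨hsub, hrl⟩, h0⟩, hfl⟩ := hS
    obtain ⟨h1, h2, h3⟩ := decomp h0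
    rw [hfl] at h1 h2 h3
    have hT1 : ∀ x ∈ S \ Finset.range l, l + 1 ≤ x := fun x hx => h2 x hx
    rw [mem_countSet]
    constructor
    · intro y hy
      rw [Finset.mem_image] at hy
      obtain ⟨x, hx, rfl⟩ := hy
      have hxn := Finset.mem_range.mp (hsub (Finset.mem_sdiff.mp hx).1)
      have := hT1 x hx
      rw [Finset.mem_range]; omega
    · have hc : ((S \ Finset.range l).image (fun x => x - (l+1))).map (addEmb (l+1))
          = S \ Finset.range l := image_sub_map_add hT1
      have : runLengths ((S \ Finset.range l).image (fun x => x - (l+1)))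
          = runLengths (S \ Finset.range l) := by
        rw [← runLengths_map_add _ (l+1), hc]
      rw [this]
      have := h3.symm.trans hrl  -- l ::ₘ runLengths (S \ range l) = M
      rw [← this, Multiset.erase_cons_head]
  · -- backward membership
    intro T hT
    show Finset.range l ∪ T.map (addEmb (l+1)) ∈ Finset.filter (fun S => firstLen S = l) ((countSet n M).filter fun S => 0 ∈ S)
    rw [mem_countSet] at hT
    obtain ⟨hsub, hrl⟩ := hT
    have hTgt : ∀ x ∈ T.map (addEmb (l+1)), l < x := by
      intro x hx; rw [mem_map_add] at hx; omega
    have hlnotmem : l ∉ Finset.range l ∪ T.map (addEmb (l+1)) := by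
      rw [Finset.mem_union, Finset.mem_range]
      rintro (h | h)
      · omega
      · exact absurd (hTgt l h) (lt_irrefl l)
    rw [Finset.mem_filter, Finset.mem_filter, mem_countSet]
    refine ⟨⟨⟨?_, ?_⟩, ?_⟩, ?_⟩
    · intro x hx
      rw [Finset.mem_union, Finset.mem_range] at hx
      rw [Finset.mem_range]
      rcases hx with h | h
      · omega
      · rw [mem_map_add] at h
        have := Finset.mem_range.mp (hsub h.2)
        omega
    · rw [runLengths_union_range hlpos _ hTgt, runLengths_map_add, hrl,
        Multiset.cons_erase hl]
    · rw [Finset.mem_union, Finset.mem_range]; left; omega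
    · exact firstLen_eq (Finset.subset_union_left) hlnotmem

  · -- left inverse
    intro S hS
    show Finset.range l ∪ ((S \ Finset.range l).image (fun x => x - (l+1))).map (addEmb (l+1)) = S
    rw [Finset.mem_filter, Finset.mem_filter, mem_countSet] at hS
    obtain ⟨⟨⟨hsub, hrl⟩, h0⟩, hfl⟩ := hS
    obtain ⟨h1, h2, -⟩ := decomp h0
    rw [hfl] at h1 h2
    rw [image_sub_map_add (fun x hx => h2 x hx), ← h1]
  · -- right inverse
    intro T hT
    show ((Finset.range l ∪ T.map (addEmb (l+1))) \ Finset.range l).image (fun x => x - (l+1)) = T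
    have hdisj : Disjoint (Finset.range l) (T.map (addEmb (l+1))) := by
      rw [Finset.disjoint_left]
      intro x hx hx'
      rw [Finset.mem_range] at hx
      rw [mem_map_add] at hx'
      omega
    rw [Finset.union_sdiff_cancel_left hdisj, map_add_image_sub]



lemma countSet_rec (n : ℕ) (M : Multiset ℕ) (hpos : ∀ j ∈ M, 0 < j)
    (hn : M.sum ≤ n) :
    (countSet n M).card = (countSet (n-1) M).card
      + ∑ l ∈ M.toFinset, (countSet (n - l - 1) (M.erase l)).card := by
  rw [← card_no_zero, ← card_with_zero n M hpos hn]
  have h := Finset.card_filter_add_card_filter_not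
    (s := countSet n M) (p := fun S => (0:ℕ) ∈ S)
  omega

lemma prod_factorial_erase {M : Multiset ℕ} {l : ℕ} (hl : l ∈ M) :
    (∏ j ∈ M.toFinset, ((M.count j).factorial : ℤ)) =
      (M.count l : ℤ) *
        ∏ j ∈ (M.erase l).toFinset, (((M.erase l).count j).factorial : ℤ) := by
  have h1 : ∏ j ∈ (M.erase l).toFinset, (((M.erase l).count j).factorial : ℤ)
      = ∏ j ∈ M.toFinset, (((M.erase l).count j).factorial : ℤ) := by
    apply Finset.prod_subset
    · intro j hj
      rw [Multiset.mem_toFinset] at *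
      exact Multiset.mem_of_mem_erase hj
    · intro j hjM hjE
      rw [Multiset.mem_toFinset] at hjE
      rw [Multiset.count_eq_zero.mpr hjE]
      simp
  rw [h1]
  have hlF : l ∈ M.toFinset := Multiset.mem_toFinset.mpr hl
  rw [← Finset.mul_prod_erase _ _ hlF,
    ← Finset.mul_prod_erase _ (fun j => (((M.erase l).count j).factorial : ℤ)) hlF]
  have hc : M.count l = (M.erase l).count l + 1 := by
    rw [Multiset.count_erase_self]
    have := Multiset.count_pos.mpr hl
    omega
  have hprodeq : ∏ j ∈ M.toFinset.erase l, ((M.count j).factorial : ℤ)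
      = ∏ j ∈ M.toFinset.erase l, (((M.erase l).count j).factorial : ℤ) := by
    apply Finset.prod_congr rfl
    intro j hj
    rw [Multiset.count_erase_of_ne (Finset.ne_of_mem_erase hj)]
  rw [hprodeq, hc]
  push_cast [Nat.factorial_succ]
  ring

lemma aux_main : ∀ n : ℕ, ∀ M : Multiset ℕ, (∀ j ∈ M, 0 < j) → M.sum - 1 ≤ n →
    ((countSet n M).card : ℤ) * ∏ j ∈ M.toFinset, ((M.count j).factorial : ℤ)
      = ∏ t ∈ Finset.range M.card, ((n : ℤ) + 1 - (M.sum : ℤ) - (t : ℤ)) := by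
  intro n
  induction n using Nat.strong_induction_on with
  | _ n ih =>
    intro M hpos hn
    rcases eq_or_ne M 0 with rfl | hM
    · simp [countSet_zero]
    · have hcpos : 0 < Multiset.card M := Multiset.card_pos.mpr hM
      have hsumpos : 0 < M.sum := by
        obtain ⟨j, hj⟩ := Multiset.exists_mem_of_ne_zero hM
        exact lt_of_lt_of_le (hpos j hj) (Multiset.le_sum_of_mem hj)
      rcases Nat.lt_or_ge n M.sum with hlt | hge
      · -- base case n = M.sum - 1
        have hcount : (countSet n M).card = 0 := by
          rw [Finset.card_eq_zero, Finset.eq_empty_iff_forall_notMem]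
          intro S hS
          rw [mem_countSet] at hS
          have h1 := sum_runLengths_le S
          have h2 : S.card ≤ n := by
            have := Finset.card_le_card hS.1
            simpa using this
          rw [hS.2] at h1
          omega
        rw [hcount]
        rw [Finset.prod_eq_zero (Finset.mem_range.mpr hcpos)]
        · simp
        · have : n + 1 = M.sum := by omega
          push_cast [← this]
          ring
      · -- inductive step
        have hn1 : 1 ≤ n := le_trans hsumpos hge
        rw [countSet_rec n M hpos hge, Nat.cast_add, Nat.cast_sum, add_mul]
        -- first term
        have ih1 := ih (n-1) (by omega) M hpos (by omega)
        have hcast1 : ((n-1 : ℕ) : ℤ) = (n : ℤ) - 1 := by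
          push_cast [Nat.cast_sub hn1]; ring
        rw [hcast1] at ih1
        have hfirst : ((countSet (n-1) M).card : ℤ) *
            (∏ j ∈ M.toFinset, ((M.count j).factorial : ℤ))
            = ∏ t ∈ Finset.range M.card, ((n : ℤ) - (M.sum : ℤ) - (t : ℤ)) := by
          rw [ih1]
          apply Finset.prod_congr rfl
          intro t ht
          ring
        -- second term
        have hsecond : (∑ l ∈ M.toFinset, ((countSet (n - l - 1) (M.erase l)).card : ℤ)) *
            (∏ j ∈ M.toFinset, ((M.count j).factorial : ℤ))
            = (M.card : ℤ) *
              ∏ t ∈ Finset.range (M.card - 1), ((n : ℤ) - (M.sum : ℤ) - (t : ℤ)) := by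
          rw [Finset.sum_mul]
          have hterm : ∀ l ∈ M.toFinset,
              ((countSet (n - l - 1) (M.erase l)).card : ℤ) *
                (∏ j ∈ M.toFinset, ((M.count j).factorial : ℤ))
              = (M.count l : ℤ) *
                ∏ t ∈ Finset.range (M.card - 1), ((n : ℤ) - (M.sum : ℤ) - (t : ℤ)) := by
            intro l hlF
            have hl : l ∈ M := Multiset.mem_toFinset.mp hlF
            have hlk : l ≤ M.sum := Multiset.le_sum_of_mem hl
            have hsum_erase : l + (M.erase l).sum = M.sum := by
              rw [← Multiset.sum_cons, Multiset.cons_erase hl]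
            have hcard_erase : (M.erase l).card + 1 = M.card := by
              rw [← Multiset.card_cons, Multiset.cons_erase hl]
            have ihl := ih (n - l - 1) (by have := hpos l hl; omega) (M.erase l)
              (fun j hj => hpos j (Multiset.mem_of_mem_erase hj)) (by omega)
            rw [prod_factorial_erase hl, ← mul_assoc, mul_comm ((countSet _ _).card : ℤ),
              mul_assoc, ihl]
            congr 1
            have hcc : (M.erase l).card = M.card - 1 := by omega
            rw [hcc]
            apply Finset.prod_congr rfl
            intro t ht
            rw [Finset.mem_range] at ht
            -- need casts
            rcases Nat.eq_zero_or_pos (M.card - 1) with h0 | hpos'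
            · omega
            · have herasene : M.erase l ≠ 0 := by
                intro h
                rw [h] at hcc
                simp at hcc
                omega
              obtain ⟨j, hj⟩ := Multiset.exists_mem_of_ne_zero herasene
              have hj1 : 1 ≤ (M.erase l).sum :=
                le_trans (hpos j (Multiset.mem_of_mem_erase hj)) (Multiset.le_sum_of_mem hj)
              have hlltk : l < M.sum := by omega
              have hlltn : l + 1 ≤ n := by omega
              have h1 : ((n - l - 1 : ℕ) : ℤ) = (n : ℤ) - l - 1 := by
                omega
              have h2 : (((M.erase l).sum : ℕ) : ℤ) = (M.sum : ℤ) - l := by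
                omega
              rw [h1, h2]
              ring
          rw [Finset.sum_congr rfl hterm, ← Finset.sum_mul]
          congr 1
          rw [← Nat.cast_sum]
          congr 1
          exact Multiset.toFinset_sum_count_eq M
        rw [hfirst, hsecond]
        -- final algebra
        obtain ⟨c', hc'⟩ : ∃ c', M.card = c' + 1 := ⟨M.card - 1, by omega⟩
        rw [hc']
        simp only [Nat.add_sub_cancel]
        rw [Finset.prod_range_succ, Finset.prod_range_succ']
        have : ∀ t ∈ Finset.range c', ((n:ℤ) + 1 - M.sum - (t+1 : ℕ))
            = ((n:ℤ) - M.sum - t) := by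
          intro t ht; push_cast; ring
        rw [Finset.prod_congr rfl this]
        push_cast [hc']
        ring

/-- Let `M` be a nonempty multiset of positive integers with sum
`k'` and cardinality `c`, in which `j` occurs with multiplicity `a_j = M.count j`.
For `n ≥ k' - 1`, the number of subsets of `{0, …, n-1}` whose multiset of maximal
run lengths is `M`, multiplied by `∏_j (a_j)!`, equals `∏_{t<c} (n + 1 - k' - t)`. -/
theorem statement2 (M : Multiset ℕ) (hM : M ≠ 0) (hpos : ∀ j ∈ M, 0 < j)
    (k' c : ℕ) (hk' : k' = M.sum) (hc : c = M.card)
    (n : ℕ) (hn : k' - 1 ≤ n) :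
    ((((Finset.range n).powerset.filter fun S => runLengths S = M).card : ℤ) *
        ∏ j ∈ M.toFinset, ((M.count j).factorial : ℤ)) =
      ∏ t ∈ Finset.range c, ((n : ℤ) + 1 - (k' : ℤ) - (t : ℤ)) := by
  subst hk' hc
  exact aux_main n M hpos hn
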